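/- Let {A_v}_{v∈V} be a finite collection of events in a probability space, where the index set V is the vertex set of a chordal graph G. Then Σ_{I∈𝒞(G)} (−1)^{|I|−1} · Pr(⋂_{i∈I} A_i) ≥ 0, i.e., the alternating sum of intersection probabilities over the clique complex of a chordal graph is non-negative. -/

import Mathlib

open MeasureTheory Finset
open scoped Classical

/-- A graph is chordal if it contains no induced cycle of length four or greater. -/
def SimpleGraph.IsChordal {V : Type*} (G : SimpleGraph V) : Prop :=
  ∀ n : ℕ, 4 ≤ n → ∀ s : Set V, ¬ Nonempty (G.induce s ≃g SimpleGraph.cycleGraph n)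

namespace ChordalProof

variable {V : Type*} (G : SimpleGraph V)

/-- Reachability within a finite vertex set `S`. -/
def RIn (S : Finset V) : V → V → Prop :=
  Relation.ReflTransGen (fun a b => a ∈ S ∧ b ∈ S ∧ G.Adj a b)

variable {G}

lemma RIn.symm {S : Finset V} {u w : V} (h : RIn G S u w) : RIn G S w u :=
  haveI : Std.Symm (fun a b : V => a ∈ S ∧ b ∈ S ∧ G.Adj a b) :=
    ⟨fun _ _ h => ⟨h.2.1, h.1, h.2.2.symm⟩⟩
  Std.Symm.symm (r := Relation.ReflTransGen (fun a b : V => a ∈ S ∧ b ∈ S ∧ G.Adj a b)) _ _ h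

lemma RIn.mono {S S' : Finset V} (hS : S ⊆ S') {u w : V} (h : RIn G S u w) :
    RIn G S' u w :=
  Relation.ReflTransGen.mono (fun _ _ h => ⟨hS h.1, hS h.2.1, h.2.2⟩) _ _ h

/-- A walk in `S` from `u` to `w` of length `k`, encoded as a function. -/
def FnChain (S : Finset V) (u w : V) (k : ℕ) (c : ℕ → V) : Prop :=
  c 0 = u ∧ c k = w ∧ (∀ t, t < k → G.Adj (c t) (c (t + 1))) ∧ (∀ t, t ≤ k → c t ∈ S)

lemma exists_fnChain {S : Finset V} {u w : V} (hu : u ∈ S) (h : RIn G S u w) :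
    ∃ k c, FnChain (G := G) S u w k c := by
  induction h with
  | refl => exact ⟨0, fun _ => u, rfl, rfl, fun t ht => absurd ht (by omega),
      fun t _ => hu⟩
  | @tail b w' h1 h2 ih =>
    obtain ⟨k, c, hc0, hck, hadj, hmem⟩ := ih
    refine ⟨k + 1, fun t => if t ≤ k then c t else w', by simpa using hc0, by simp, ?_, ?_⟩
    · intro t ht
      by_cases h' : t + 1 ≤ k
      · simpa [show t ≤ k by omega, h'] using hadj t (by omega)
      · have ht' : t = k := by omega
        subst ht'
        simpa [h', hck] using h2.2.2
    · intro t ht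
      by_cases h' : t ≤ k
      · simpa [h'] using hmem t h'
      · simpa [h'] using h2.2.1

lemma FnChain.rIn {S : Finset V} {u w : V} {k : ℕ} {c : ℕ → V}
    (h : FnChain (G := G) S u w k c) : RIn G S u w := by
  obtain ⟨hc0, hck, hadj, hmem⟩ := h
  subst hc0 hck
  induction k with
  | zero => exact Relation.ReflTransGen.refl
  | succ k ih =>
    exact Relation.ReflTransGen.tail
      (ih (fun t ht => hadj t (by omega)) (fun t ht => hmem t (by omega)))
      ⟨hmem k (by omega), hmem (k + 1) le_rfl, hadj k (by omega)⟩

lemma FnChain.shortcut {S : Finset V} {u w : V} {k : ℕ} {c : ℕ → V}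
    (h : FnChain (G := G) S u w k c) {i Δ : ℕ} (hΔ : 1 ≤ Δ) (hik : i + Δ + 1 ≤ k)
    (hadj : G.Adj (c i) (c (i + Δ + 1))) :
    ∃ c', FnChain (G := G) S u w (k - Δ) c' := by
  obtain ⟨hc0, hck, hadjc, hmem⟩ := h
  refine ⟨fun t => if t ≤ i then c t else c (t + Δ), ?_, ?_, ?_, ?_⟩
  · simpa using hc0
  · have : ¬ (k - Δ ≤ i) := by omega
    simp only [this, if_false]
    rw [show k - Δ + Δ = k by omega, hck]
  · intro t ht
    rcases lt_trichotomy t i with h' | h' | h'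
    · simpa [show t ≤ i by omega, show t + 1 ≤ i by omega] using hadjc t (by omega)
    · subst h'
      simpa [show ¬ (t + 1 ≤ t) by omega, show t + 1 + Δ = t + Δ + 1 by omega] using hadj
    · simp only [show ¬ (t ≤ i) by omega, show ¬ (t + 1 ≤ i) by omega, if_false]
      rw [show t + 1 + Δ = (t + Δ) + 1 by omega]
      exact hadjc (t + Δ) (by omega)
  · intro t ht
    by_cases h' : t ≤ i
    · simpa [h'] using hmem t (by omega)
    · simpa [h'] using hmem (t + Δ) (by omega)

/-- A walk of minimal length is an induced path. -/
lemma minimal_chain_props {S : Finset V} {u w : V} {k : ℕ} {c : ℕ → V}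
    (h : FnChain (G := G) S u w k c)
    (hmin : ∀ k', k' < k → ¬ ∃ c', FnChain (G := G) S u w k' c') :
    ∀ i j, i < j → j ≤ k → c i ≠ c j ∧ (G.Adj (c i) (c j) → j = i + 1) := by
  intro i j hij hjk
  constructor
  · intro he
    by_cases hjkeq : j = k
    · subst hjkeq
      exact hmin i hij ⟨c, h.1, he.symm ▸ h.2.1, fun t ht => h.2.2.1 t (by omega),
        fun t ht => h.2.2.2 t (by omega)⟩
    · have hadj : G.Adj (c i) (c (i + (j - i) + 1)) := by
        rw [show i + (j - i) + 1 = j + 1 by omega, he]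
        exact h.2.2.1 j (by omega)
      obtain ⟨c', hc'⟩ := h.shortcut (by omega : 1 ≤ j - i) (by omega) hadj
      exact hmin (k - (j - i)) (by omega) ⟨c', hc'⟩
  · intro hadj
    by_contra hne
    have hji : i + (j - i - 1) + 1 = j := by omega
    obtain ⟨c', hc'⟩ := h.shortcut (i := i) (Δ := j - i - 1) (by omega) (by omega) (by rw [hji]; exact hadj)
    exact hmin (k - (j - i - 1)) (by omega) ⟨c', hc'⟩

lemma cycleAdj {k : ℕ} (p q : Fin (k + 2)) :
    (SimpleGraph.cycleGraph (k + 2)).Adj p q ↔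
      (q.val = (p.val + 1) % (k + 2) ∨ p.val = (q.val + 1) % (k + 2)) := by
  rw [SimpleGraph.cycleGraph_adj, sub_eq_iff_eq_add, sub_eq_iff_eq_add,
    Fin.ext_iff, Fin.ext_iff, Fin.val_add, Fin.val_add, Fin.val_one]
  rw [Nat.add_comm 1 q.val, Nat.add_comm 1 p.val]
  tauto

lemma hmod {k : ℕ} (m : ℕ) (hm : m < k + 2) :
    (m + 1) % (k + 2) = if m = k + 1 then 0 else m + 1 := by
  split_ifs with h
  · subst h; exact Nat.mod_self _
  · exact Nat.mod_eq_of_lt (by omega)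

lemma not_chordal_of_path {v : V} {k : ℕ} (hk : 2 ≤ k) {c : ℕ → V}
    (hadj : ∀ t, t < k → G.Adj (c t) (c (t + 1)))
    (hne : ∀ t1 t2, t1 < t2 → t2 ≤ k → c t1 ≠ c t2)
    (hnadj : ∀ t1 t2, t1 + 1 < t2 → t2 ≤ k → ¬ G.Adj (c t1) (c t2))
    (hv0 : G.Adj v (c 0)) (hvk : G.Adj v (c k))
    (hvm : ∀ t, 0 < t → t < k → ¬ G.Adj v (c t))
    (hvne : ∀ t, t ≤ k → c t ≠ v) :
    ¬ G.IsChordal := by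
  intro hG
  set g : Fin (k + 2) → V := fun p => if p.val = 0 then v else c (p.val - 1) with hg
  have hccAdj : ∀ t1 t2, t1 ≤ k → t2 ≤ k →
      (G.Adj (c t1) (c t2) ↔ (t2 = t1 + 1 ∨ t1 = t2 + 1)) := by
    intro t1 t2 h1 h2
    constructor
    · intro h
      by_contra hcon
      push_neg at hcon
      rcases lt_trichotomy t1 t2 with h' | h' | h'
      · exact hnadj t1 t2 (by omega) h2 h
      · exact G.irrefl (h' ▸ h)
      · exact hnadj t2 t1 (by omega) h1 h.symm
    · intro h
      rcases h with h | h
      · subst h; exact hadj t1 (by omega)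
      · subst h; exact (hadj t2 (by omega)).symm
  have hvcAdj : ∀ t, t ≤ k → (G.Adj v (c t) ↔ (t = 0 ∨ t = k)) := by
    intro t ht
    constructor
    · intro h
      by_contra hcon
      push_neg at hcon
      exact hvm t (by omega) (by omega) h
    · intro h
      rcases h with rfl | rfl
      · exact hv0
      · exact hvk
  have hginj : Function.Injective g := by
    intro p q hpq
    simp only [hg] at hpq
    split_ifs at hpq with h1 h2 h2
    · exact Fin.ext (by omega)
    · exact absurd hpq.symm (hvne (q.val - 1) (by omega))
    · exact absurd hpq (hvne (p.val - 1) (by omega))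
    · have hp : p.val - 1 ≤ k := by omega
      have hq : q.val - 1 ≤ k := by omega
      have heq : p.val - 1 = q.val - 1 := by
        by_contra hcon
        rcases lt_trichotomy (p.val - 1) (q.val - 1) with h' | h' | h'
        · exact hne _ _ h' hq hpq
        · exact hcon h'
        · exact hne _ _ h' hp hpq.symm
      exact Fin.ext (by omega)
  have key : ∀ p q : Fin (k + 2),
      (SimpleGraph.cycleGraph (k + 2)).Adj p q ↔ G.Adj (g p) (g q) := by
    intro p q
    rw [cycleAdj, hmod p.val p.isLt, hmod q.val q.isLt]
    have hp2 : p.val < k + 2 := p.isLt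
    have hq2 : q.val < k + 2 := q.isLt
    simp only [hg]
    by_cases hp : p.val = 0 <;> by_cases hq : q.val = 0
    · rw [if_pos hp, if_pos hq]
      simp only [G.irrefl, iff_false]
      split_ifs <;> omega
    · rw [if_pos hp, if_neg hq, hvcAdj (q.val - 1) (by omega)]
      split_ifs <;> omega
    · rw [if_neg hp, if_pos hq]
      rw [show G.Adj (c (p.val - 1)) v ↔ G.Adj v (c (p.val - 1)) from ⟨fun h => h.symm, fun h => h.symm⟩]
      rw [hvcAdj (p.val - 1) (by omega)]
      split_ifs <;> omega
    · rw [if_neg hp, if_neg hq, hccAdj (p.val - 1) (q.val - 1) (by omega) (by omega)]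
      split_ifs <;> omega
  set e : Fin (k + 2) ≃ Set.range g := Equiv.ofInjective g hginj with he
  have hgval : ∀ p : Fin (k + 2), (e p : V) = g p := fun p => rfl
  refine hG (k + 2) (by omega) (Set.range g) ⟨?_⟩
  refine ⟨e.symm, ?_⟩
  intro a b
  rw [key (e.symm a) (e.symm b)]
  have ha : g (e.symm a) = (a : V) := by rw [← hgval, e.apply_symm_apply]
  have hb : g (e.symm b) = (b : V) := by rw [← hgval, e.apply_symm_apply]
  rw [ha, hb]
  exact Iff.rfl

/-- In a chordal graph, if two neighbors of `v` are connected within a set `T`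
not containing `v`, they are connected within the neighbors of `v` inside `T`. -/
lemma reach_filter (hG : G.IsChordal) {T : Finset V} {v : V} (hv : v ∉ T) {u w : V}
    (hu : u ∈ T) (hw : w ∈ T) (hau : G.Adj v u) (haw : G.Adj v w)
    (h : RIn G T u w) : RIn G (T.filter (G.Adj v)) u w := by
  have hex : ∃ k, ∃ c, FnChain (G := G) T u w k c := exists_fnChain hu h
  classical
  obtain ⟨c, hc⟩ := Nat.find_spec hex
  set k := Nat.find hex with hkdef
  have hmin : ∀ k', k' < k → ¬ ∃ c', FnChain (G := G) T u w k' c' :=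
    fun k' hk' => Nat.find_min hex hk'
  have hprops := minimal_chain_props hc hmin
  -- every vertex on the minimal chain is a neighbor of v
  have hall : ∀ t, t ≤ k → G.Adj v (c t) := by
    by_contra hcon
    push_neg at hcon
    obtain ⟨m, hm, hnadjm⟩ := hcon
    have hm0 : m ≠ 0 := by rintro rfl; rw [hc.1] at hnadjm; exact hnadjm hau
    have hmk : m ≠ k := by rintro rfl; rw [hc.2.1] at hnadjm; exact hnadjm haw
    have hPi : G.Adj v (c (Nat.findGreatest (fun t => G.Adj v (c t)) m)) :=
      Nat.findGreatest_spec (P := fun t => G.Adj v (c t)) (Nat.zero_le m)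
        (show G.Adj v (c 0) by rw [hc.1]; exact hau)
    set i := Nat.findGreatest (fun t => G.Adj v (c t)) m with hi
    have him : i ≤ m := Nat.findGreatest_le m
    have hineq : i ≠ m := by rintro h'; exact hnadjm (h' ▸ hPi)
    have hilt : i < m := by omega
    have hwitP : G.Adj v (c (m + 1 + (k - m - 1))) := by
      rw [show m + 1 + (k - m - 1) = k by omega, hc.2.1]; exact haw
    have hexj : ∃ s, G.Adj v (c (m + 1 + s)) := ⟨k - m - 1, hwitP⟩
    set j := m + 1 + Nat.find hexj with hj
    have hPj : G.Adj v (c j) := Nat.find_spec hexj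
    have hjk : j ≤ k := by
      have := Nat.find_min' hexj hwitP
      omega
    have hmid : ∀ t, i < t → t < j → ¬ G.Adj v (c t) := by
      intro t ht1 ht2
      rcases lt_trichotomy t m with h' | h' | h'
      · exact Nat.findGreatest_is_greatest ht1 (by omega)
      · exact h' ▸ hnadjm
      · have hlt : t - (m + 1) < Nat.find hexj := by omega
        have := Nat.find_min hexj hlt
        rwa [show m + 1 + (t - (m + 1)) = t by omega] at this
    -- apply the induced-cycle lemma to the segment from i to j
    have hk2 : 2 ≤ j - i := by omega
    refine not_chordal_of_path (v := v) (c := fun t => c (i + t)) hk2 ?_ ?_ ?_ ?_ ?_ ?_ ?_ hG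
    · intro t ht
      show G.Adj (c (i + t)) (c (i + (t + 1)))
      rw [show i + (t + 1) = (i + t) + 1 by omega]
      exact hc.2.2.1 (i + t) (by omega)
    · intro t1 t2 h12 h2
      exact (hprops (i + t1) (i + t2) (by omega) (by omega)).1
    · intro t1 t2 h12 h2 hadj
      have := (hprops (i + t1) (i + t2) (by omega) (by omega)).2 hadj
      omega
    · simpa using hPi
    · show G.Adj v (c (i + (j - i)))
      rw [show i + (j - i) = j by omega]; exact hPj
    · intro t ht1 ht2
      exact hmid (i + t) (by omega) (by omega)
    · intro t ht
      intro hcv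
      exact hv (hcv ▸ hc.2.2.2 (i + t) (by omega))
  -- hence the chain lives in the filtered set
  have hch : FnChain (G := G) (T.filter (G.Adj v)) u w k c :=
    ⟨hc.1, hc.2.1, hc.2.2.1, fun t ht => Finset.mem_filter.mpr ⟨hc.2.2.2 t ht, hall t ht⟩⟩
  exact hch.rIn

variable (G)

/-- The connected component (within `S`) of `u`. -/
noncomputable def cls (S : Finset V) (u : V) : Finset V :=
  S.filter (fun x => RIn G S u x)

/-- The number of connected components of the graph induced on `S`. -/
noncomputable def compCount (S : Finset V) : ℕ := (S.image (cls G S)).card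

variable {G}

lemma mem_cls {S : Finset V} {u x : V} : x ∈ cls G S u ↔ x ∈ S ∧ RIn G S u x :=
  Finset.mem_filter

lemma mem_cls_self {S : Finset V} {u : V} (hu : u ∈ S) : u ∈ cls G S u :=
  mem_cls.mpr ⟨hu, Relation.ReflTransGen.refl⟩

lemma cls_eq_of_rIn {S : Finset V} {u w : V} (h : RIn G S u w) :
    cls G S u = cls G S w := by
  ext x
  simp only [mem_cls]
  exact ⟨fun hx => ⟨hx.1, h.symm.trans hx.2⟩, fun hx => ⟨hx.1, h.trans hx.2⟩⟩

lemma rIn_of_cls_eq {S : Finset V} {u w : V} (hw : w ∈ S) (h : cls G S u = cls G S w) :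
    RIn G S u w := (mem_cls.mp (h ▸ mem_cls_self hw)).2

lemma cls_subset {S : Finset V} {u : V} : cls G S u ⊆ S := Finset.filter_subset _ _

lemma rIn_erase_of_not_reach {S : Finset V} {v u : V} (hnr : ¬ RIn G S u v) {y : V}
    (h : RIn G S u y) : RIn G (S.erase v) u y := by
  induction h with
  | refl => exact Relation.ReflTransGen.refl
  | @tail b c h1 h2 ih =>
    have hb : b ≠ v := by rintro rfl; exact hnr h1
    have hc : c ≠ v := by rintro rfl; exact hnr (h1.tail h2)
    exact ih.tail ⟨Finset.mem_erase.mpr ⟨hb, h2.1⟩, Finset.mem_erase.mpr ⟨hc, h2.2.1⟩, h2.2.2⟩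

lemma reach_to_v {S : Finset V} {v u : V} (hu : u ∈ S.erase v) (h : RIn G S u v) :
    ∃ x ∈ (S.erase v).filter (G.Adj v), RIn G (S.erase v) u x := by
  induction h using Relation.ReflTransGen.head_induction_on with
  | refl => exact absurd (Finset.mem_erase.mp hu).1 (by simp)
  | @head a c hac hcv ih =>
    by_cases hcveq : c = v
    · subst hcveq
      refine ⟨a, Finset.mem_filter.mpr ⟨hu, hac.2.2.symm⟩, Relation.ReflTransGen.refl⟩
    · have hane : a ≠ v := (Finset.mem_erase.mp hu).1
      have hcmem : c ∈ S.erase v := Finset.mem_erase.mpr ⟨hcveq, hac.2.1⟩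
      obtain ⟨x, hx, hr⟩ := ih hcmem
      exact ⟨x, hx, Relation.ReflTransGen.head ⟨hu, hcmem, hac.2.2⟩ hr⟩

lemma reach_of_nbr {S : Finset V} {v u x : V} (hv : v ∈ S)
    (hx : x ∈ (S.erase v).filter (G.Adj v)) (h : RIn G (S.erase v) u x) :
    RIn G S u v := by
  obtain ⟨hx1, hx2⟩ := Finset.mem_filter.mp hx
  exact (h.mono (Finset.erase_subset _ _)).tail
    ⟨Finset.erase_subset _ _ hx1, hv, hx2.symm⟩

lemma card_image_eq_of_ker {α β γ : Type*} [DecidableEq β] [DecidableEq γ]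
    (s : Finset α) (f : α → β) (g : α → γ)
    (h : ∀ x ∈ s, ∀ y ∈ s, (f x = f y ↔ g x = g y)) :
    (s.image f).card = (s.image g).card := by
  classical
  refine Finset.card_bij (fun b hb => g (Finset.mem_image.mp hb).choose) ?_ ?_ ?_
  · intro b hb
    exact Finset.mem_image_of_mem g (Finset.mem_image.mp hb).choose_spec.1
  · intro b1 h1 b2 h2 heq
    have s1 := (Finset.mem_image.mp h1).choose_spec
    have s2 := (Finset.mem_image.mp h2).choose_spec
    rw [← s1.2, ← s2.2]
    exact (h _ s1.1 _ s2.1).mpr heq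
  · intro c hc
    obtain ⟨y, hy, rfl⟩ := Finset.mem_image.mp hc
    refine ⟨f y, Finset.mem_image_of_mem f hy, ?_⟩
    have sp := (Finset.mem_image.mp (Finset.mem_image_of_mem f hy)).choose_spec
    exact (h _ sp.1 _ hy).mp sp.2

lemma compCount_rec (hG : G.IsChordal) {S : Finset V} {v : V} (hv : v ∈ S) :
    (compCount G S : ℤ) =
      compCount G (S.erase v) + 1 - compCount G ((S.erase v).filter (G.Adj v)) := by
  classical
  set T := S.erase v with hT
  set N := T.filter (G.Adj v) with hN
  set CT := T.image (cls G T) with hCT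
  set X := CT.filter (fun C => ∀ x ∈ C, ¬ G.Adj v x) with hX
  set Y := CT.filter (fun C => ¬ ∀ x ∈ C, ¬ G.Adj v x) with hY
  have hvT : v ∉ T := Finset.notMem_erase v S
  -- classes of S not reaching v agree with classes of T
  have hclsTS : ∀ u ∈ T, ¬ RIn G S u v → cls G S u = cls G T u := by
    intro u hu hnr
    ext x
    simp only [mem_cls]
    constructor
    · rintro ⟨hx, hr⟩
      have hxv : x ≠ v := by rintro rfl; exact hnr hr
      exact ⟨Finset.mem_erase.mpr ⟨hxv, hx⟩, rIn_erase_of_not_reach hnr hr⟩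
    · rintro ⟨hx, hr⟩
      exact ⟨Finset.erase_subset _ _ hx, hr.mono (Finset.erase_subset _ _)⟩
  have hnotreach : ∀ u ∈ T, (∀ x ∈ cls G T u, ¬ G.Adj v x) → ¬ RIn G S u v := by
    intro u hu hprop hr
    obtain ⟨x, hx, hrx⟩ := reach_to_v hu hr
    exact hprop x (mem_cls.mpr ⟨(Finset.mem_filter.mp hx).1, hrx⟩) (Finset.mem_filter.mp hx).2
  have himage : S.image (cls G S) = insert (cls G S v) X := by
    ext C
    simp only [Finset.mem_image, Finset.mem_insert, hX, Finset.mem_filter, hCT,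
      Finset.mem_image]
    constructor
    · rintro ⟨u, hu, rfl⟩
      by_cases hr : RIn G S u v
      · exact Or.inl (cls_eq_of_rIn hr)
      · have huv : u ≠ v := by rintro rfl; exact hr Relation.ReflTransGen.refl
        have huT : u ∈ T := Finset.mem_erase.mpr ⟨huv, hu⟩
        refine Or.inr ⟨⟨u, huT, (hclsTS u huT hr).symm⟩, ?_⟩
        intro x hxC hadj
        rw [hclsTS u huT hr] at hxC
        obtain ⟨hx1, hx2⟩ := mem_cls.mp hxC
        exact hr (reach_of_nbr hv (Finset.mem_filter.mpr ⟨hx1, hadj⟩) hx2)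
    · rintro (rfl | ⟨⟨u, hu, rfl⟩, hprop⟩)
      · exact ⟨v, hv, rfl⟩
      · have hnr : ¬ RIn G S u v := hnotreach u hu hprop
        exact ⟨u, Finset.erase_subset _ _ hu, hclsTS u hu hnr⟩
  have hnotmem : cls G S v ∉ X := by
    intro hmem
    obtain ⟨hmem1, _⟩ := Finset.mem_filter.mp hmem
    obtain ⟨u, hu, hequ⟩ := Finset.mem_image.mp hmem1
    have : v ∈ cls G T u := hequ ▸ mem_cls_self hv
    exact hvT (cls_subset this)
  have h4 : compCount G S = X.card + 1 := by
    rw [compCount, himage, Finset.card_insert_of_notMem hnotmem]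
  have h5 : compCount G T = X.card + Y.card := by
    rw [compCount, ← hCT, hX, hY]
    exact (Finset.card_filter_add_card_filter_not _).symm
  have h6 : Y = N.image (cls G T) := by
    ext C
    simp only [hY, Finset.mem_filter, hCT, Finset.mem_image, hN]
    constructor
    · rintro ⟨⟨u, hu, rfl⟩, hprop⟩
      push_neg at hprop
      obtain ⟨x, hxC, hadj⟩ := hprop
      obtain ⟨hx1, hx2⟩ := mem_cls.mp hxC
      exact ⟨x, ⟨hx1, hadj⟩, (cls_eq_of_rIn hx2).symm⟩
    · rintro ⟨x, hx, rfl⟩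
      obtain ⟨hx1, hx2⟩ := hx
      refine ⟨⟨x, hx1, rfl⟩, ?_⟩
      push_neg
      exact ⟨x, mem_cls_self hx1, hx2⟩
  have h7 : (N.image (cls G T)).card = compCount G N := by
    rw [compCount]
    refine card_image_eq_of_ker _ _ _ ?_
    intro x hx y hy
    obtain ⟨hx1, hx2⟩ := Finset.mem_filter.mp hx
    obtain ⟨hy1, hy2⟩ := Finset.mem_filter.mp hy
    constructor
    · intro h
      exact cls_eq_of_rIn (reach_filter hG hvT hx1 hy1 hx2 hy2 (rIn_of_cls_eq hy1 h))
    · intro h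
      exact cls_eq_of_rIn ((rIn_of_cls_eq (Finset.mem_filter.mpr ⟨hy1, hy2⟩) h).mono
        (Finset.filter_subset _ _))
  have h8 : compCount G N = Y.card := by rw [← h7, h6]
  rw [h4, h5, h8]
  push_cast
  ring

variable (G)

/-- Non-empty cliques contained in `S`. -/
noncomputable def cliquesIn (S : Finset V) : Finset (Finset V) :=
  S.powerset.filter (fun I => I.Nonempty ∧ G.IsClique (I : Set V))

/-- The (unreduced) Euler characteristic of the clique complex on `S`. -/
noncomputable def Ez (S : Finset V) : ℝ := ∑ I ∈ cliquesIn G S, (-1 : ℝ) ^ (I.card - 1)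

variable {G}

lemma Ez_rec {S : Finset V} {v : V} (hv : v ∈ S) :
    Ez G S = Ez G (S.erase v) + 1 - Ez G ((S.erase v).filter (G.Adj v)) := by
  classical
  set T := S.erase v with hT
  set N := T.filter (G.Adj v) with hN
  set Dv := N.powerset.filter (fun K : Finset V => G.IsClique (K : Set V)) with hDv
  have hvT : v ∉ T := Finset.notMem_erase v S
  have hvN : v ∉ N := fun h => hvT (Finset.filter_subset _ _ h)
  have hsplit : cliquesIn G S = cliquesIn G T ∪ Dv.image (insert v) := by
    ext I
    simp only [cliquesIn, Finset.mem_union, Finset.mem_filter, Finset.mem_powerset,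
      Finset.mem_image, hDv]
    constructor
    · rintro ⟨hIS, hne, hcl⟩
      by_cases hvI : v ∈ I
      · right
        refine ⟨I.erase v, ⟨?_, ?_⟩, Finset.insert_erase hvI⟩
        · intro x hx
          obtain ⟨hxv, hxI⟩ := Finset.mem_erase.mp hx
          refine Finset.mem_filter.mpr ⟨Finset.mem_erase.mpr ⟨hxv, hIS hxI⟩, ?_⟩
          exact hcl (Finset.mem_coe.mpr hvI) (Finset.mem_coe.mpr hxI) (Ne.symm hxv)
        · exact hcl.subset (by exact_mod_cast Finset.erase_subset v I)
      · left
        exact ⟨fun x hx => Finset.mem_erase.mpr ⟨fun h => hvI (h ▸ hx), hIS hx⟩, hne, hcl⟩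
    · rintro (⟨hIT, hne, hcl⟩ | ⟨K, ⟨hKN, hKcl⟩, rfl⟩)
      · exact ⟨fun x hx => Finset.erase_subset _ _ (hIT hx), hne, hcl⟩
      · refine ⟨?_, Finset.insert_nonempty _ _, ?_⟩
        · refine Finset.insert_subset hv (fun x hx => ?_)
          exact Finset.erase_subset _ _ (Finset.filter_subset _ _ (hKN hx))
        · rw [Finset.coe_insert]
          rw [SimpleGraph.isClique_insert]
          refine ⟨hKcl, fun b hb _ => ?_⟩
          exact (Finset.mem_filter.mp (hKN (Finset.mem_coe.mp hb))).2
  have hdisj : Disjoint (cliquesIn G T) (Dv.image (insert v)) := by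
    rw [Finset.disjoint_left]
    intro I hI hI'
    obtain ⟨K, hK, rfl⟩ := Finset.mem_image.mp hI'
    simp only [cliquesIn, Finset.mem_filter, Finset.mem_powerset] at hI
    exact hvT (hI.1 (Finset.mem_insert_self v K))
  have hinj : ∀ K1 ∈ Dv, ∀ K2 ∈ Dv, insert v K1 = insert v K2 → K1 = K2 := by
    intro K1 h1 K2 h2 heq
    have hv1 : v ∉ K1 := fun h =>
      hvN (Finset.mem_powerset.mp (Finset.mem_filter.mp h1).1 h)
    have hv2 : v ∉ K2 := fun h =>
      hvN (Finset.mem_powerset.mp (Finset.mem_filter.mp h2).1 h)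
    rw [← Finset.erase_insert hv1, ← Finset.erase_insert hv2, heq]
  have hDvsplit : Dv = insert ∅ (cliquesIn G N) := by
    ext K
    simp only [hDv, cliquesIn, Finset.mem_filter, Finset.mem_powerset, Finset.mem_insert]
    constructor
    · rintro ⟨hKN, hKcl⟩
      rcases K.eq_empty_or_nonempty with rfl | hne
      · exact Or.inl rfl
      · exact Or.inr ⟨hKN, hne, hKcl⟩
    · rintro (rfl | ⟨hKN, _, hKcl⟩)
      · exact ⟨Finset.empty_subset _, by simp [SimpleGraph.IsClique]⟩
      · exact ⟨hKN, hKcl⟩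
  have hDsum : ∑ K ∈ Dv, (-1 : ℝ) ^ K.card = 1 - Ez G N := by
    rw [hDvsplit, Finset.sum_insert (by simp [cliquesIn])]
    have : ∑ K ∈ cliquesIn G N, (-1 : ℝ) ^ K.card
        = - ∑ K ∈ cliquesIn G N, (-1 : ℝ) ^ (K.card - 1) := by
      rw [← Finset.sum_neg_distrib]
      refine Finset.sum_congr rfl (fun K hK => ?_)
      have hne : K.Nonempty := (Finset.mem_filter.mp hK).2.1
      have : K.card = (K.card - 1) + 1 := by
        have := Finset.card_pos.mpr hne; omega
      conv_lhs => rw [this]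
      rw [pow_succ]
      ring
    rw [this, Ez]
    simp only [Finset.card_empty, pow_zero]
    ring
  rw [Ez, hsplit, Finset.sum_union hdisj, Finset.sum_image hinj]
  have : ∑ K ∈ Dv, (-1 : ℝ) ^ ((insert v K).card - 1) = ∑ K ∈ Dv, (-1 : ℝ) ^ K.card := by
    refine Finset.sum_congr rfl (fun K hK => ?_)
    have hvK : v ∉ K := fun h =>
      hvN (Finset.mem_powerset.mp (Finset.mem_filter.mp hK).1 h)
    rw [Finset.card_insert_of_notMem hvK]
    simp
  rw [this, hDsum]
  simp only [Ez]
  ring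

lemma Ez_eq_compCount (hG : G.IsChordal) (S : Finset V) :
    Ez G S = (compCount G S : ℝ) := by
  classical
  induction S using Finset.strongInduction with
  | _ S ih =>
    rcases S.eq_empty_or_nonempty with rfl | ⟨v, hv⟩
    · simp [Ez, cliquesIn, compCount, Finset.filter_singleton, Finset.not_nonempty_empty]
    · have hT : S.erase v ⊂ S := Finset.erase_ssubset hv
      have hNsub : (S.erase v).filter (G.Adj v) ⊂ S :=
        lt_of_le_of_lt (Finset.filter_subset _ _) hT
      have h1 := ih _ hT
      have h2 := ih _ hNsub
      have h3 := compCount_rec hG hv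
      rw [Ez_rec hv, h1, h2]
      have h3' : (compCount G S : ℝ) = (compCount G (S.erase v) : ℝ) + 1 -
          (compCount G ((S.erase v).filter (G.Adj v)) : ℝ) := by
        exact_mod_cast h3
      linarith

lemma Ez_nonneg (hG : G.IsChordal) (S : Finset V) : 0 ≤ Ez G S := by
  rw [Ez_eq_compCount hG]
  positivity

end ChordalProof

/-- The clique complex of `G`: the collection of all non-empty cliques of `G`. -/
noncomputable def SimpleGraph.cliqueComplex {V : Type*} [Fintype V] (G : SimpleGraph V) :
    Finset (Finset V) :=
  Finset.univ.powerset.filter fun I => I.Nonempty ∧ G.IsClique (I : Set V)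

/-- The independence number of `G`: the maximum size of a set of pairwise
non-adjacent vertices. -/
noncomputable def SimpleGraph.indepNum' {V : Type*} [Fintype V] (G : SimpleGraph V) : ℕ :=
  sSup {n | ∃ s : Finset V, ((s : Set V).Pairwise fun v w => ¬ G.Adj v w) ∧ s.card = n}

theorem alternating_sum_nonneg {Ω V : Type*} [MeasurableSpace Ω] [Fintype V]
    (μ : Measure Ω) [IsProbabilityMeasure μ] (G : SimpleGraph V) (hG : G.IsChordal)
    (A : V → Set Ω) (hA : ∀ v, MeasurableSet (A v)) :
    0 ≤ ∑ I ∈ G.cliqueComplex, (-1 : ℝ) ^ (I.card - 1) * (μ (⋂ i ∈ I, A i)).toReal := by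
  classical
  have hmeas : ∀ I : Finset V, MeasurableSet (⋂ i ∈ I, A i) := fun I =>
    MeasurableSet.biInter I.countable_toSet (fun i _ => hA i)
  have hint : ∀ I : Finset V,
      Integrable (fun ω => Set.indicator (⋂ i ∈ I, A i) (1 : Ω → ℝ) ω) μ := fun I =>
    (integrable_const 1).indicator (hmeas I)
  have key : ∀ ω : Ω,
      (∑ I ∈ G.cliqueComplex, (-1 : ℝ) ^ (I.card - 1) *
        Set.indicator (⋂ i ∈ I, A i) (1 : Ω → ℝ) ω)
      = ChordalProof.Ez G (Finset.univ.filter (fun v => ω ∈ A v)) := by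
    intro ω
    have h1 : ∀ I : Finset V, (-1 : ℝ) ^ (I.card - 1) *
        Set.indicator (⋂ i ∈ I, A i) (1 : Ω → ℝ) ω
        = if I ⊆ Finset.univ.filter (fun v => ω ∈ A v) then (-1 : ℝ) ^ (I.card - 1) else 0 := by
      intro I
      rw [Set.indicator_apply]
      have : ω ∈ ⋂ i ∈ I, A i ↔ I ⊆ Finset.univ.filter (fun v => ω ∈ A v) := by
        rw [Set.mem_iInter₂]
        constructor
        · intro h i hi
          exact Finset.mem_filter.mpr ⟨Finset.mem_univ i, h i hi⟩
        · intro h i hi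
          exact (Finset.mem_filter.mp (h hi)).2
      rw [this]
      split_ifs <;> simp
    rw [Finset.sum_congr rfl (fun I _ => h1 I), ← Finset.sum_filter]
    have h2 : G.cliqueComplex.filter (fun I => I ⊆ Finset.univ.filter (fun v => ω ∈ A v))
        = ChordalProof.cliquesIn G (Finset.univ.filter (fun v => ω ∈ A v)) := by
      ext I
      simp only [SimpleGraph.cliqueComplex, ChordalProof.cliquesIn, Finset.mem_filter,
        Finset.mem_powerset, Finset.subset_univ, true_and]
      tauto
    rw [h2, ChordalProof.Ez]
  have hsum : ∑ I ∈ G.cliqueComplex, (-1 : ℝ) ^ (I.card - 1) * (μ (⋂ i ∈ I, A i)).toReal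
      = ∫ ω, (∑ I ∈ G.cliqueComplex, (-1 : ℝ) ^ (I.card - 1) *
          Set.indicator (⋂ i ∈ I, A i) (1 : Ω → ℝ) ω) ∂μ := by
    rw [MeasureTheory.integral_finset_sum _ (fun I _ => (hint I).const_mul _)]
    refine Finset.sum_congr rfl (fun I _ => ?_)
    rw [integral_const_mul, MeasureTheory.integral_indicator_one (hmeas I), Measure.real]
  rw [hsum]
  refine integral_nonneg (fun ω => ?_)
  rw [key ω]
  exact ChordalProof.Ez_nonneg hG _
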